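/- Let F = ℚ(α,β,z₀,z₁) be the field of rational functions in four indeterminates, and let ∂ : F → F be the unique derivation extending formal partial differentiation with respect to z₁ on polynomials. Then in the ring F[[w]] of formal power series in w over F the following identity holds: (α - β·w²)·(1 - w²)²·(1 + z₁²·w²) · [∑_{j≥0} z₀^{2j}·w^{2j}] · [∑_{j≥0} (j+1)·z₁^{2j}·w^{2j}] = α + (3α·z₁² - 2α - β + α·z₀²)·w² + ( (z₀²-1)²·(α·z₀² - β)/(z₀+z₁)² )·∑_{j≥0} z₀^{2j}·w^{2j+4} + ∑_{j≥0} w^{2j+4} · ∂( (z₁²-1)·( (α·z₀²-β)(z₀²-1)·z₀^{2j+1} - (α·z₁²-β)(z₁²-1)·z₁^{2j+1} ) / (z₀² - z₁²) ). (Here ∑ z^{2j}w^{2j} and ∑(j+1)z^{2j}w^{2j} are the expansions of 1/(1-z²w²) and 1/(1-z²w²)².) -/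

import Mathlib

noncomputable section

/-- The field `F = ℚ(α,β,z₀,z₁)` of rational functions in four indeterminates over `ℚ`. -/
abbrev FF : Type := FractionRing (MvPolynomial (Fin 4) ℚ)

def gα : FF := algebraMap (MvPolynomial (Fin 4) ℚ) FF (MvPolynomial.X 0)
def gβ : FF := algebraMap (MvPolynomial (Fin 4) ℚ) FF (MvPolynomial.X 1)
def gz0 : FF := algebraMap (MvPolynomial (Fin 4) ℚ) FF (MvPolynomial.X 2)
def gz1 : FF := algebraMap (MvPolynomial (Fin 4) ℚ) FF (MvPolynomial.X 3)

/-- `∑_{j≥0} z₀^{2j} w^{2j}`, the expansion of `1/(1-z₀²w²)`. -/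
def SA : PowerSeries FF :=
  PowerSeries.mk fun m => if m % 2 = 0 then gz0 ^ m else 0

/-- `∑_{j≥0} (j+1) z₁^{2j} w^{2j}`, the expansion of `1/(1-z₁²w²)²`. -/
def SB : PowerSeries FF :=
  PowerSeries.mk fun m => if m % 2 = 0 then ((m / 2 + 1 : ℕ) : FF) * gz1 ^ m else 0

/-- `∑_{j≥0} z₀^{2j} w^{2j+4}`. -/
def S4 : PowerSeries FF :=
  PowerSeries.mk fun m => if 4 ≤ m ∧ m % 2 = 0 then gz0 ^ (m - 4) else 0

/-- The rational function whose `∂/∂z₁`-derivative enters the recursion: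
`e j = (z₁²-1)((αz₀²-β)(z₀²-1)z₀^{2j+1} - (αz₁²-β)(z₁²-1)z₁^{2j+1})/(z₀²-z₁²)`. -/
def eTerm (j : ℕ) : FF :=
  (gz1 ^ 2 - 1) *
    ((gα * gz0 ^ 2 - gβ) * (gz0 ^ 2 - 1) * gz0 ^ (2 * j + 1)
      - (gα * gz1 ^ 2 - gβ) * (gz1 ^ 2 - 1) * gz1 ^ (2 * j + 1))
    / (gz0 ^ 2 - gz1 ^ 2)

/-! ### Auxiliary material -/

lemma aux_hz01 : gz0 + gz1 ≠ 0 := by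
  rw [gz0, gz1, ← map_add]
  intro h
  have h2 := (IsFractionRing.injective (MvPolynomial (Fin 4) ℚ) FF)
    (h.trans (map_zero _).symm)
  have := congrArg (MvPolynomial.eval fun _ => (1:ℚ)) h2
  simp at this

lemma aux_hz01' : gz0 - gz1 ≠ 0 := by
  rw [gz0, gz1, ← map_sub]
  intro h
  have h2 := (IsFractionRing.injective (MvPolynomial (Fin 4) ℚ) FF)
    (h.trans (map_zero _).symm)
  have := congrArg (MvPolynomial.eval fun i => if i = 2 then (1:ℚ) else 0) h2
  simp at this

lemma aux_hd : gz0 ^ 2 - gz1 ^ 2 ≠ 0 := by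
  have : gz0 ^ 2 - gz1 ^ 2 = (gz0 + gz1) * (gz0 - gz1) := by ring
  rw [this]
  exact mul_ne_zero aux_hz01 aux_hz01'

lemma aux_geom_one {R : Type*} [CommRing R] (a : R) :
    (1 - PowerSeries.C (a ^ 2) * PowerSeries.X ^ 2) *
      (PowerSeries.mk fun m => if m % 2 = 0 then a ^ m else 0) = 1 := by
  set S : PowerSeries R := PowerSeries.mk fun m => if m % 2 = 0 then a ^ m else 0 with hS
  have key : (1 - PowerSeries.C (a ^ 2) * PowerSeries.X ^ 2) * S
      = S - PowerSeries.C (a ^ 2) * (S * PowerSeries.X ^ 2) := by ring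
  rw [key]
  ext n
  rw [map_sub, PowerSeries.coeff_C_mul, PowerSeries.coeff_mul_X_pow', PowerSeries.coeff_one]
  rcases Nat.lt_or_ge n 2 with h | h
  · interval_cases n <;> simp [hS]
  · obtain ⟨m, rfl⟩ : ∃ m, n = m + 2 := ⟨n - 2, by omega⟩
    have h0 : ¬ (m + 2 = 0) := by omega
    have h1 : (2:ℕ) ≤ m + 2 := by omega
    simp only [hS, PowerSeries.coeff_mk, if_pos h1, if_neg h0, Nat.add_sub_cancel,
      Nat.add_mod_right]
    split_ifs with hm
    · rw [pow_add]; ring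
    · ring

lemma aux_geom_two {R : Type*} [CommRing R] (a : R) :
    (1 - PowerSeries.C (a ^ 2) * PowerSeries.X ^ 2) ^ 2 *
      (PowerSeries.mk fun m => if m % 2 = 0 then ((m / 2 + 1 : ℕ) : R) * a ^ m else 0) = 1 := by
  set S : PowerSeries R :=
    PowerSeries.mk fun m => if m % 2 = 0 then ((m / 2 + 1 : ℕ) : R) * a ^ m else 0 with hS
  have key : (1 - PowerSeries.C (a ^ 2) * PowerSeries.X ^ 2) ^ 2 * S
      = S - PowerSeries.C (2 * a ^ 2) * (S * PowerSeries.X ^ 2)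
          + PowerSeries.C (a ^ 4) * (S * PowerSeries.X ^ 4) := by
    simp only [map_mul, map_pow, map_ofNat]
    ring
  rw [key]
  ext n
  rw [map_add, map_sub, PowerSeries.coeff_C_mul, PowerSeries.coeff_C_mul,
    PowerSeries.coeff_mul_X_pow', PowerSeries.coeff_mul_X_pow', PowerSeries.coeff_one]
  rcases Nat.lt_or_ge n 4 with h | h
  · interval_cases n <;> (simp [hS]; try ring)
  · obtain ⟨m, rfl⟩ : ∃ m, n = m + 4 := ⟨n - 4, by omega⟩
    have h0 : ¬ (m + 4 = 0) := by omega
    have h1 : (2:ℕ) ≤ m + 4 := by omega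
    have h2 : (4:ℕ) ≤ m + 4 := by omega
    have e2 : m + 4 - 2 = m + 2 := by omega
    have e4 : m + 4 - 4 = m := by omega
    have p2 : (m + 2) % 2 = m % 2 := by omega
    have p4 : (m + 4) % 2 = m % 2 := by omega
    have d2 : (m + 2) / 2 = m / 2 + 1 := by omega
    have d4 : (m + 4) / 2 = m / 2 + 2 := by omega
    simp only [hS, PowerSeries.coeff_mk, if_pos h1, if_pos h2, if_neg h0, e2, e4, p2, p4, d2, d4]
    split_ifs with hm
    · push_cast
      rw [show m + 4 = m + 2 + 2 from by omega, pow_add, pow_add]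
      ring
    · ring

/-- `∑_{j≥0} z₁^{2j} w^{2j}`, the expansion of `1/(1-z₁²w²)`. -/
def SC : PowerSeries FF :=
  PowerSeries.mk fun m => if m % 2 = 0 then gz1 ^ m else 0

lemma aux_geomSA : (1 - PowerSeries.C (gz0 ^ 2) * PowerSeries.X ^ 2) * SA = 1 :=
  aux_geom_one gz0

lemma aux_geomSC : (1 - PowerSeries.C (gz1 ^ 2) * PowerSeries.X ^ 2) * SC = 1 :=
  aux_geom_one gz1

lemma aux_geomSB : (1 - PowerSeries.C (gz1 ^ 2) * PowerSeries.X ^ 2) ^ 2 * SB = 1 :=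
  aux_geom_two gz1

lemma aux_S4X : S4 = SA * PowerSeries.X ^ 4 := by
  ext n
  rw [S4, SA, PowerSeries.coeff_mk, PowerSeries.coeff_mul_X_pow']
  simp only [PowerSeries.coeff_mk]
  split_ifs <;> first | rfl | omega

def UU : FF := 2 * gz0 * gz1 * (gα * gz0 ^ 2 - gβ) * (gz0 ^ 2 - 1) ^ 2
def BB : FF := (gα * gz1 ^ 2 - gβ) * (gz1 ^ 2 - 1)
def BB' : FF := 2 * gα * gz1 * (gz1 ^ 2 - 1) + (gα * gz1 ^ 2 - gβ) * (2 * gz1)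
def VV : FF := -2 * gz1 ^ 2 * BB * (gz0 ^ 2 - 1) - gz1 * (gz1 ^ 2 - 1) * BB' * (gz0 ^ 2 - gz1 ^ 2)
  + (gz1 ^ 2 - 1) * BB * (gz0 ^ 2 - gz1 ^ 2)
def WW : FF := -2 * (gz1 ^ 2 - 1) * BB * (gz0 ^ 2 - gz1 ^ 2)

lemma aux_hDe (D : Derivation ℚ FF FF)
    (hDα : D gα = 0) (hDβ : D gβ = 0) (hDz0 : D gz0 = 0) (hDz1 : D gz1 = 1) (j : ℕ) :
    (gz0 ^ 2 - gz1 ^ 2) ^ 2 * D (eTerm j)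
      = UU * gz0 ^ (2 * j) + VV * gz1 ^ (2 * j) + WW * ((j : FF) + 1) * gz1 ^ (2 * j) := by
  rw [eTerm, Derivation.leibniz_div]
  simp only [smul_eq_mul, map_sub, Derivation.leibniz, Derivation.leibniz_pow,
    Derivation.map_one_eq_zero, hDα, hDβ, hDz0, hDz1, Nat.add_sub_cancel, nsmul_eq_mul,
    smul_eq_mul, mul_zero, zero_mul, mul_one, add_zero, zero_add, sub_zero, zero_sub, mul_neg]
  rw [inv_pow, ← mul_assoc, mul_inv_cancel₀ (pow_ne_zero 2 aux_hd), one_mul]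
  rw [UU, VV, WW, BB, BB']
  push_cast
  ring

/-- the tail of the derivative series -/
def TT (D : Derivation ℚ FF FF) : PowerSeries FF :=
  PowerSeries.mk fun m => if m % 2 = 0 then D (eTerm (m / 2)) else 0

lemma aux_DserX (D : Derivation ℚ FF FF) :
    (PowerSeries.mk fun m => if 4 ≤ m ∧ m % 2 = 0 then D (eTerm ((m - 4) / 2)) else 0)
      = TT D * PowerSeries.X ^ 4 := by
  ext n
  rw [PowerSeries.coeff_mk, PowerSeries.coeff_mul_X_pow']
  simp only [TT, PowerSeries.coeff_mk]
  split_ifs <;> first | rfl | omega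

lemma aux_TC (D : Derivation ℚ FF FF)
    (hDα : D gα = 0) (hDβ : D gβ = 0) (hDz0 : D gz0 = 0) (hDz1 : D gz1 = 1) :
    PowerSeries.C ((gz0 ^ 2 - gz1 ^ 2) ^ 2) * TT D
      = PowerSeries.C UU * SA + PowerSeries.C VV * SC + PowerSeries.C WW * SB := by
  ext m
  rw [map_add, map_add, PowerSeries.coeff_C_mul, PowerSeries.coeff_C_mul,
    PowerSeries.coeff_C_mul, PowerSeries.coeff_C_mul]
  simp only [TT, SA, SB, SC, PowerSeries.coeff_mk]
  by_cases hm : m % 2 = 0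
  · simp only [if_pos hm]
    have h2 : 2 * (m / 2) = m := by omega
    have key := aux_hDe D hDα hDβ hDz0 hDz1 (m / 2)
    rw [h2] at key
    rw [key]
    push_cast
    ring
  · simp [hm]

set_option maxHeartbeats 2000000 in
theorem dessin_EO_key_identity
    (D : Derivation ℚ FF FF)
    (hDα : D gα = 0) (hDβ : D gβ = 0) (hDz0 : D gz0 = 0) (hDz1 : D gz1 = 1) :
    (PowerSeries.C gα - PowerSeries.C gβ * PowerSeries.X ^ 2)
        * (1 - PowerSeries.X ^ 2) ^ 2
        * (1 + PowerSeries.C (gz1 ^ 2) * PowerSeries.X ^ 2) * SA * SB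
      = PowerSeries.C gα
        + PowerSeries.C (3 * gα * gz1 ^ 2 - 2 * gα - gβ + gα * gz0 ^ 2) * PowerSeries.X ^ 2
        + PowerSeries.C
            ((gz0 ^ 2 - 1) ^ 2 * (gα * gz0 ^ 2 - gβ) / (gz0 + gz1) ^ 2) * S4
        + PowerSeries.mk (fun m =>
            if 4 ≤ m ∧ m % 2 = 0 then D (eTerm ((m - 4) / 2)) else 0) := by
  set C := PowerSeries.C (R := FF)
  set X : PowerSeries FF := PowerSeries.X
  set K : PowerSeries FF := C ((gz0 ^ 2 - gz1 ^ 2) ^ 2) with hK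
  set Q : PowerSeries FF :=
    (1 - C (gz0 ^ 2) * X ^ 2) * (1 - C (gz1 ^ 2) * X ^ 2) ^ 2 with hQ
  have hK0 : K ≠ 0 := by
    intro h
    apply pow_ne_zero 2 aux_hd
    have h2 := congrArg (PowerSeries.constantCoeff (R := FF)) h
    rwa [hK, PowerSeries.constantCoeff_C, map_zero] at h2
  have hQ0 : Q ≠ 0 := by
    intro h
    have h2 := congrArg (PowerSeries.constantCoeff (R := FF)) h
    have hCdef : C = PowerSeries.C (R := FF) := rfl
    have hXdef : X = PowerSeries.X := rfl
    simp only [hQ, hCdef, hXdef, map_mul, map_pow, map_sub, map_one, map_zero,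
      PowerSeries.constantCoeff_X, PowerSeries.constantCoeff_C] at h2
    norm_num at h2
  have hKQ : K * Q ≠ 0 := mul_ne_zero hK0 hQ0
  apply mul_left_cancel₀ hKQ
  -- left side
  have hL : K * Q * ((C gα - C gβ * X ^ 2) * (1 - X ^ 2) ^ 2 * (1 + C (gz1 ^ 2) * X ^ 2)
        * SA * SB)
      = K * ((C gα - C gβ * X ^ 2) * (1 - X ^ 2) ^ 2 * (1 + C (gz1 ^ 2) * X ^ 2)) := by
    calc K * Q * ((C gα - C gβ * X ^ 2) * (1 - X ^ 2) ^ 2 * (1 + C (gz1 ^ 2) * X ^ 2)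
            * SA * SB)
        = (K * ((C gα - C gβ * X ^ 2) * (1 - X ^ 2) ^ 2 * (1 + C (gz1 ^ 2) * X ^ 2)))
            * ((1 - C (gz0 ^ 2) * X ^ 2) * SA)
            * ((1 - C (gz1 ^ 2) * X ^ 2) ^ 2 * SB) := by rw [hQ]; ring
      _ = _ := by rw [aux_geomSA, aux_geomSB, mul_one, mul_one]
  rw [hL]
  -- right side
  have hc4 : (gz0 ^ 2 - gz1 ^ 2) ^ 2 *
      ((gz0 ^ 2 - 1) ^ 2 * (gα * gz0 ^ 2 - gβ) / (gz0 + gz1) ^ 2)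
      = (gz0 ^ 2 - 1) ^ 2 * (gα * gz0 ^ 2 - gβ) * (gz0 - gz1) ^ 2 := by
    rw [← mul_div_assoc, div_eq_iff (pow_ne_zero 2 aux_hz01)]
    ring
  have hR : K * Q * (C gα
        + C (3 * gα * gz1 ^ 2 - 2 * gα - gβ + gα * gz0 ^ 2) * X ^ 2
        + C ((gz0 ^ 2 - 1) ^ 2 * (gα * gz0 ^ 2 - gβ) / (gz0 + gz1) ^ 2) * S4
        + PowerSeries.mk (fun m =>
            if 4 ≤ m ∧ m % 2 = 0 then D (eTerm ((m - 4) / 2)) else 0))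
      = K * Q * (C gα + C (3 * gα * gz1 ^ 2 - 2 * gα - gβ + gα * gz0 ^ 2) * X ^ 2)
        + C ((gz0 ^ 2 - 1) ^ 2 * (gα * gz0 ^ 2 - gβ) * (gz0 - gz1) ^ 2)
            * (1 - C (gz1 ^ 2) * X ^ 2) ^ 2 * X ^ 4
        + (C UU * (1 - C (gz1 ^ 2) * X ^ 2) ^ 2
            + C VV * (1 - C (gz0 ^ 2) * X ^ 2) * (1 - C (gz1 ^ 2) * X ^ 2)
            + C WW * (1 - C (gz0 ^ 2) * X ^ 2)) * X ^ 4 := by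
    rw [aux_S4X, aux_DserX D]
    have expand : K * Q * (C gα
          + C (3 * gα * gz1 ^ 2 - 2 * gα - gβ + gα * gz0 ^ 2) * X ^ 2
          + C ((gz0 ^ 2 - 1) ^ 2 * (gα * gz0 ^ 2 - gβ) / (gz0 + gz1) ^ 2) * (SA * X ^ 4)
          + TT D * X ^ 4)
        = K * Q * (C gα + C (3 * gα * gz1 ^ 2 - 2 * gα - gβ + gα * gz0 ^ 2) * X ^ 2)
          + (K * C ((gz0 ^ 2 - 1) ^ 2 * (gα * gz0 ^ 2 - gβ) / (gz0 + gz1) ^ 2)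
              * (1 - C (gz1 ^ 2) * X ^ 2) ^ 2 * X ^ 4) * ((1 - C (gz0 ^ 2) * X ^ 2) * SA)
          + Q * (K * TT D) * X ^ 4 := by rw [hQ]; ring
    rw [expand, aux_geomSA, mul_one, aux_TC D hDα hDβ hDz0 hDz1, hK, ← map_mul, hc4]
    have expand2 : Q * (C UU * SA + C VV * SC + C WW * SB) * X ^ 4
        = (C UU * (1 - C (gz1 ^ 2) * X ^ 2) ^ 2 * X ^ 4) * ((1 - C (gz0 ^ 2) * X ^ 2) * SA)
          + (C VV * (1 - C (gz0 ^ 2) * X ^ 2) * (1 - C (gz1 ^ 2) * X ^ 2) * X ^ 4)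
              * ((1 - C (gz1 ^ 2) * X ^ 2) * SC)
          + (C WW * (1 - C (gz0 ^ 2) * X ^ 2) * X ^ 4)
              * ((1 - C (gz1 ^ 2) * X ^ 2) ^ 2 * SB) := by rw [hQ]; ring
    rw [expand2, aux_geomSA, aux_geomSC, aux_geomSB, mul_one, mul_one, mul_one]
    ring
  rw [hR]
  -- final polynomial identity
  rw [hK, hQ]
  simp only [C, UU, VV, WW, BB, BB', map_mul, map_sub, map_add, map_pow, map_one, map_ofNat,
    map_neg]
  ring
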